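/- K-fractional revival occurs in X (at some time τ > 0) if and only if the eigenvalues of A satisfy the ratio condition with respect to P_min^K, i.e., for any r, s in one class of P_min^K and distinct h, k in one class of P_min^K, the ratio (θ_r − θ_s)/(θ_h − θ_k) is rational. -/

import Mathlib

set_option maxHeartbeats 1600000

open Matrix

noncomputable def transU {n : ℕ} (A : Matrix (Fin n) (Fin n) ℝ) (t : ℝ) :
    Matrix (Fin n) (Fin n) ℂ :=
  NormedSpace.exp ((-Complex.I * (t : ℂ)) • A.map (Complex.ofReal))

def DKmat {n : ℕ} (K : Finset (Fin n)) : Matrix (Fin n) (Fin n) ℝ :=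
  Matrix.of fun i j => if i = j ∧ i ∈ K then 1 else 0

def CommutesWithDK {n d : ℕ} (E : Fin (d + 1) → Matrix (Fin n) (Fin n) ℝ)
    (K : Finset (Fin n))
    (P : Finpartition (Finset.univ : Finset (Fin (d + 1)))) : Prop :=
  ∀ C ∈ P.parts, (∑ r ∈ C, E r) * DKmat K = DKmat K * (∑ r ∈ C, E r)

section Aux

open Finset
open scoped Nat

attribute [local instance] Matrix.linftyOpNormedRing Matrix.linftyOpNormedAlgebra

variable {N : ℕ}

lemma pow_spectral {ι : Type*} [Fintype ι] [DecidableEq ι]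
    (F : ι → Matrix (Fin N) (Fin N) ℂ)
    (horth : ∀ r s, r ≠ s → F r * F s = 0)
    (hsum : ∑ r, F r = 1) (c : ι → ℂ) (k : ℕ) :
    (∑ r, c r • F r) ^ k = ∑ r, c r ^ k • F r := by
  induction k with
  | zero => simp [hsum]
  | succ k ih =>
    rw [pow_succ, ih, Finset.sum_mul_sum]
    refine Finset.sum_congr rfl fun r _ => ?_
    rw [Finset.sum_eq_single r]
    · rw [smul_mul_smul_comm]
      have : F r * F r = F r := by
        have h1 : F r * (∑ s, F s) = F r := by rw [hsum, mul_one]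
        rw [Finset.mul_sum, Finset.sum_eq_single r] at h1
        · exact h1
        · exact fun s _ hs => horth r s (Ne.symm hs)
        · simp
      rw [this, ← pow_succ]
    · intro s _ hs
      rw [smul_mul_smul_comm, horth r s (Ne.symm hs), smul_zero]
    · simp

lemma exp_spectral {ι : Type*} [Fintype ι] [DecidableEq ι]
    (F : ι → Matrix (Fin N) (Fin N) ℂ)
    (horth : ∀ r s, r ≠ s → F r * F s = 0)
    (hsum : ∑ r, F r = 1) (c : ι → ℂ) :
    NormedSpace.exp (∑ r, c r • F r) = ∑ r, Complex.exp (c r) • F r := by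
  set M : Matrix (Fin N) (Fin N) ℂ := ∑ r, c r • F r with hM
  have hpow := pow_spectral F horth hsum c
  have hsummable : Summable fun k : ℕ => ((k ! : ℂ))⁻¹ • M ^ k :=
    NormedSpace.expSeries_summable' M
  have hscal : ∀ r, Summable fun k : ℕ => ((k ! : ℂ))⁻¹ * c r ^ k := by
    intro r
    simpa [smul_eq_mul] using NormedSpace.expSeries_summable' (𝕂 := ℂ) (c r)
  have hscal' : ∀ r, Summable fun k : ℕ => (((k+1)! : ℂ))⁻¹ * c r ^ (k+1) := by
    intro r
    exact (summable_nat_add_iff (f := fun k : ℕ => ((k ! : ℂ))⁻¹ * c r ^ k) 1).2 (hscal r)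
  have hexp : ∀ r, Complex.exp (c r) = 1 + ∑' k : ℕ, (((k+1)! : ℂ))⁻¹ * c r ^ (k+1) := by
    intro r
    have h1 : Complex.exp (c r) = ∑' k : ℕ, ((k ! : ℂ))⁻¹ * c r ^ k := by
      rw [Complex.exp_eq_exp_ℂ, NormedSpace.exp_eq_tsum (𝕂 := ℂ)]
      simp [smul_eq_mul]
    rw [h1, Summable.tsum_eq_zero_add (hscal _)]
    simp
  rw [NormedSpace.exp_eq_tsum (𝕂 := ℂ)]
  show (∑' k : ℕ, ((k ! : ℂ))⁻¹ • M ^ k) = _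
  rw [Summable.tsum_eq_zero_add hsummable]
  have hterm : ∀ k : ℕ, (((k+1)! : ℂ))⁻¹ • M ^ (k+1)
      = ∑ r, ((((k+1)! : ℂ))⁻¹ * c r ^ (k+1)) • F r := by
    intro k
    rw [hpow (k+1), Finset.smul_sum]
    simp [smul_smul]
  simp only [hterm, pow_zero, Nat.factorial_zero, Nat.cast_one, inv_one, one_smul]
  rw [Summable.tsum_finsetSum (fun r _ => ((hscal' r).smul_const (F r)))]
  have : ∀ r, ∑' k : ℕ, ((((k+1)! : ℂ))⁻¹ * c r ^ (k+1)) • F r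
      = (Complex.exp (c r) - 1) • F r := by
    intro r
    rw [Summable.tsum_smul_const (hscal' r), hexp r]
    congr 1
    ring
  simp only [this, sub_smul, one_smul, Finset.sum_sub_distrib, hsum]
  abel

lemma exp_eq_of_int {τ a b : ℝ} (m : ℤ) (h : τ * (a - b) = 2 * Real.pi * m) :
    Complex.exp (-Complex.I * τ * a) = Complex.exp (-Complex.I * τ * b) := by
  rw [Complex.exp_eq_exp_iff_exists_int]
  refine ⟨-m, ?_⟩
  have h' : (τ : ℂ) * ((a : ℂ) - (b : ℂ)) = 2 * (Real.pi : ℂ) * (m : ℂ) := by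
    exact_mod_cast congrArg (Complex.ofReal) h
  push_cast
  linear_combination (-Complex.I) * h'

lemma exists_int_of_exp_eq {τ a b : ℝ}
    (h : Complex.exp (-Complex.I * τ * a) = Complex.exp (-Complex.I * τ * b)) :
    ∃ m : ℤ, τ * (a - b) = 2 * Real.pi * m := by
  rw [Complex.exp_eq_exp_iff_exists_int] at h
  obtain ⟨m, hm⟩ := h
  refine ⟨-m, ?_⟩
  have := congrArg Complex.im hm
  simp [Complex.mul_im, Complex.add_im, Complex.mul_re, Complex.I_re, Complex.I_im,
    Complex.ofReal_re, Complex.ofReal_im, Complex.intCast_re, Complex.intCast_im] at this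
  push_cast
  nlinarith [this]

end Aux

/-- K-fractional revival occurs in X (at some τ > 0) iff the eigenvalues
satisfy the ratio condition with respect to the minimal commuting partition. -/
theorem kfr_iff_ratio_condition {n d : ℕ} (A : Matrix (Fin n) (Fin n) ℝ)
    (θ : Fin (d + 1) → ℝ) (E : Fin (d + 1) → Matrix (Fin n) (Fin n) ℝ)
    (hA : A = ∑ r, θ r • E r) (hθ : Function.Injective θ)
    (hsymm : ∀ r, (E r).IsSymm)
    (hidem : ∀ r, E r * E r = E r)
    (horth : ∀ r s, r ≠ s → E r * E s = 0)
    (hsum : ∑ r, E r = 1)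
    (K : Finset (Fin n))
    (Pmin : Finpartition (Finset.univ : Finset (Fin (d + 1))))
    (hcomm : CommutesWithDK E K Pmin)
    (hmin : ∀ Q : Finpartition (Finset.univ : Finset (Fin (d + 1))),
      CommutesWithDK E K Q → Pmin ≤ Q)
    :
    (∃ τ : ℝ, 0 < τ ∧
        transU A τ * (DKmat K).map Complex.ofReal
          = (DKmat K).map Complex.ofReal * transU A τ) ↔
      (∀ C₁ ∈ Pmin.parts, ∀ C₂ ∈ Pmin.parts,
        ∀ r ∈ C₁, ∀ s ∈ C₁, ∀ u ∈ C₂, ∀ v ∈ C₂, θ u ≠ θ v →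
        ∃ q : ℚ, θ r - θ s = (q : ℝ) * (θ u - θ v)) := by
  classical
  set Fc : Fin (d + 1) → Matrix (Fin n) (Fin n) ℂ := fun r => (E r).map Complex.ofReal with hFc
  set Dc : Matrix (Fin n) (Fin n) ℂ := (DKmat K).map Complex.ofReal with hDc
  -- transfer lemmas for `map ofReal`
  have hmapmul : ∀ X Y : Matrix (Fin n) (Fin n) ℝ,
      (X * Y).map Complex.ofReal = X.map Complex.ofReal * Y.map Complex.ofReal := by
    intro X Y; ext i j
    simp [Matrix.mul_apply, Matrix.map_apply]
  have hmapsum : ∀ (s : Finset (Fin (d+1))) (f : Fin (d+1) → Matrix (Fin n) (Fin n) ℝ),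
      (∑ r ∈ s, f r).map Complex.ofReal = ∑ r ∈ s, (f r).map Complex.ofReal := by
    intro s f; ext i j
    simp [Matrix.sum_apply, Matrix.map_apply]
  have hunmap : ∀ X Y : Matrix (Fin n) (Fin n) ℝ,
      X.map Complex.ofReal = Y.map Complex.ofReal → X = Y := by
    intro X Y h; ext i j
    have := congrArg (fun M => M i j) h
    simpa [Matrix.map_apply] using this
  have horthc : ∀ r s, r ≠ s → Fc r * Fc s = 0 := by
    intro r s hrs
    rw [hFc]
    simp only
    rw [← hmapmul, horth r s hrs]
    ext i j; simp [Matrix.map_apply]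
  have hsumc : ∑ r, Fc r = 1 := by
    rw [hFc]
    simp only
    rw [← hmapsum Finset.univ E, hsum]
    exact Matrix.map_one _ Complex.ofReal_zero Complex.ofReal_one
  -- the unitary evolution in spectral form
  have hU : ∀ τ : ℝ, transU A τ = ∑ r, Complex.exp (-Complex.I * τ * θ r) • Fc r := by
    intro τ
    have h1 : (-Complex.I * (τ : ℂ)) • A.map Complex.ofReal
        = ∑ r, (-Complex.I * τ * θ r) • Fc r := by
      rw [hA]
      ext i j
      simp [hFc, Matrix.sum_apply, Matrix.map_apply, Matrix.smul_apply, Finset.mul_sum]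
      ring_nf
    rw [transU, h1, exp_spectral Fc horthc hsumc]
  -- class sums over any commuting partition commute with `Dc`
  have hcommC : ∀ (Q : Finpartition (Finset.univ : Finset (Fin (d + 1)))),
      CommutesWithDK E K Q → ∀ C ∈ Q.parts,
      (∑ r ∈ C, Fc r) * Dc = Dc * (∑ r ∈ C, Fc r) := by
    intro Q hQ C hC
    rw [hFc, hDc]
    simp only
    rw [← hmapsum C E, ← hmapmul, ← hmapmul, hQ C hC]
  constructor
  · -- forward direction
    rintro ⟨τ, hτ, hUD⟩
    set lam : Fin (d + 1) → ℂ := fun r => Complex.exp (-Complex.I * τ * θ r) with hlam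
    set G : Fin (d + 1) → Matrix (Fin n) (Fin n) ℂ := fun r => Fc r * Dc - Dc * Fc r with hG
    have hUc : Commute (∑ r, lam r • Fc r) Dc := by
      show _ = _
      rw [← hU τ]
      exact hUD
    have hGk : ∀ k : ℕ, ∑ r, lam r ^ k • G r = 0 := by
      intro k
      have h1 : Commute ((∑ r, lam r • Fc r) ^ k) Dc := hUc.pow_left k
      rw [pow_spectral Fc horthc hsumc lam k] at h1
      have h2 : (∑ r, lam r ^ k • Fc r) * Dc = ∑ r, lam r ^ k • (Fc r * Dc) := by
        rw [Finset.sum_mul]; simp [smul_mul_assoc]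
      have h3 : Dc * (∑ r, lam r ^ k • Fc r) = ∑ r, lam r ^ k • (Dc * Fc r) := by
        rw [Finset.mul_sum]; simp [mul_smul_comm]
      have h4 := h1.eq
      rw [h2, h3] at h4
      rw [hG]
      simp only [smul_sub]
      rw [Finset.sum_sub_distrib, h4, sub_self]
    have hpoly : ∀ p : Polynomial ℂ, ∑ r, (p.eval (lam r)) • G r = 0 := by
      intro p
      have : ∀ r : Fin (d+1), (p.eval (lam r)) • G r
          = ∑ k ∈ Finset.range (p.natDegree + 1), (p.coeff k) • (lam r ^ k • G r) := by
        intro r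
        rw [Polynomial.eval_eq_sum_range, Finset.sum_smul]
        simp [smul_smul]
      simp only [this]
      rw [Finset.sum_comm]
      refine Finset.sum_eq_zero fun k _ => ?_
      rw [← Finset.smul_sum, hGk k, smul_zero]
    -- build the partition induced by `lam`
    set st : Setoid (Fin (d + 1)) := ⟨fun a b => lam a = lam b,
      ⟨fun _ => rfl, fun h => h.symm, fun h1 h2 => h1.trans h2⟩⟩ with hst
    letI : DecidableRel st.r := fun a b => Classical.propDecidable _
    set Q : Finpartition (Finset.univ : Finset (Fin (d + 1))) := Finpartition.ofSetoid st with hQdef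
    have hQmem : ∀ C ∈ Q.parts, ∀ a ∈ C, ∀ b ∈ C, lam a = lam b := by
      intro C hC a ha b hb
      have hpart : Q.part a = C := Q.part_eq_of_mem hC ha
      have : b ∈ Q.part a := hpart ▸ hb
      exact Finpartition.mem_part_ofSetoid_iff_rel.1 this
    have hQfilter : ∀ C ∈ Q.parts, ∀ a ∈ C, C = Finset.univ.filter fun r => lam r = lam a := by
      intro C hC a ha
      have hpart : Q.part a = C := Q.part_eq_of_mem hC ha
      ext b
      simp only [Finset.mem_filter, Finset.mem_univ, true_and]
      constructor
      · intro hb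
        exact (hQmem C hC a ha b hb).symm
      · intro hb
        rw [← hpart]
        exact Finpartition.mem_part_ofSetoid_iff_rel.2 hb.symm
    have hQcomm : CommutesWithDK E K Q := by
      intro C hC
      obtain ⟨a, ha⟩ := Q.nonempty_of_mem_parts hC
      set p : Polynomial ℂ := Lagrange.interpolate (Finset.univ.image lam) id
        (fun x => if x = lam a then 1 else 0) with hp
      have heval : ∀ r : Fin (d+1), p.eval (lam r) = if lam r = lam a then 1 else 0 := by
        intro r
        have := Lagrange.eval_interpolate_at_node
          (fun x => if x = lam a then (1:ℂ) else 0) (Set.injOn_id _)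
          (Finset.mem_image_of_mem lam (Finset.mem_univ r))
        exact this
      have h0 := hpoly p
      simp only [heval, ite_smul, one_smul, zero_smul] at h0
      rw [← Finset.sum_filter] at h0
      rw [← hQfilter C hC a ha] at h0
      have h1 : (∑ r ∈ C, Fc r) * Dc = Dc * (∑ r ∈ C, Fc r) := by
        have h2 : ∑ r ∈ C, G r = (∑ r ∈ C, Fc r) * Dc - Dc * (∑ r ∈ C, Fc r) := by
          rw [hG]
          simp only
          rw [Finset.sum_sub_distrib, Finset.sum_mul, Finset.mul_sum]
        rw [h2] at h0
        exact sub_eq_zero.1 h0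
      apply hunmap
      rw [hmapmul, hmapmul, hmapsum]
      exact h1
    -- conclude the ratio condition
    intro C₁ hC₁ C₂ hC₂ r hr s hs u hu v hv huv
    obtain ⟨c₁, hc₁, hsub₁⟩ := hmin Q hQcomm hC₁
    obtain ⟨c₂, hc₂, hsub₂⟩ := hmin Q hQcomm hC₂
    have h1 : lam r = lam s := hQmem c₁ hc₁ r (hsub₁ hr) s (hsub₁ hs)
    have h2 : lam u = lam v := hQmem c₂ hc₂ u (hsub₂ hu) v (hsub₂ hv)
    obtain ⟨m, hm⟩ := exists_int_of_exp_eq h1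
    obtain ⟨k, hk⟩ := exists_int_of_exp_eq h2
    have hπ : (0:ℝ) < Real.pi := Real.pi_pos
    have hk0 : (k : ℝ) ≠ 0 := by
      intro h
      have : τ * (θ u - θ v) = 0 := by rw [hk, h]; ring
      have := mul_eq_zero.1 this
      rcases this with h' | h'
      · exact absurd h' (ne_of_gt hτ)
      · exact huv (by linarith [sub_eq_zero.1 h'])
    refine ⟨(m : ℚ) / (k : ℚ), ?_⟩
    have hcast : (((m : ℚ) / (k : ℚ) : ℚ) : ℝ) = (m : ℝ) / (k : ℝ) := by push_cast; ring
    rw [hcast]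
    have hτ0 : τ ≠ 0 := ne_of_gt hτ
    have e1 : θ r - θ s = 2 * Real.pi * m / τ := by
      field_simp at hm ⊢
      linarith [hm]
    have e2 : θ u - θ v = 2 * Real.pi * k / τ := by
      field_simp at hk ⊢
      linarith [hk]
    rw [e1, e2]
    field_simp
  · -- backward direction
    intro hratio
    -- it suffices to find τ > 0 making `lam` constant on parts of `Pmin`
    suffices h : ∃ τ : ℝ, 0 < τ ∧ ∀ C ∈ Pmin.parts, ∀ r ∈ C, ∀ s ∈ C,
        Complex.exp (-Complex.I * τ * θ r) = Complex.exp (-Complex.I * τ * θ s) by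
      obtain ⟨τ, hτ, hconst⟩ := h
      refine ⟨τ, hτ, ?_⟩
      set lam : Fin (d + 1) → ℂ := fun r => Complex.exp (-Complex.I * τ * θ r) with hlam
      have huniv : (Finset.univ : Finset (Fin (d+1))) = Pmin.parts.biUnion id := by
        rw [← Finset.sup_eq_biUnion]
        exact Pmin.sup_parts.symm
      have hdisj : (Pmin.parts : Set (Finset (Fin (d+1)))).PairwiseDisjoint id :=
        Pmin.supIndep.pairwiseDisjoint
      have hsplit : ∑ r, lam r • Fc r = ∑ C ∈ Pmin.parts, ∑ r ∈ C, lam r • Fc r := by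
        calc ∑ r, lam r • Fc r
            = ∑ r ∈ Pmin.parts.biUnion id, lam r • Fc r :=
              Finset.sum_congr huniv fun _ _ => rfl
          _ = ∑ C ∈ Pmin.parts, ∑ r ∈ id C, lam r • Fc r := Finset.sum_biUnion hdisj
          _ = ∑ C ∈ Pmin.parts, ∑ r ∈ C, lam r • Fc r := rfl
      have hCsum : ∀ C ∈ Pmin.parts, ∃ μ : ℂ, ∑ r ∈ C, lam r • Fc r = μ • ∑ r ∈ C, Fc r := by
        intro C hC
        obtain ⟨a, ha⟩ := Pmin.nonempty_of_mem_parts hC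
        refine ⟨lam a, ?_⟩
        rw [Finset.smul_sum]
        refine Finset.sum_congr rfl fun r hrC => ?_
        rw [show lam r = lam a from hconst C hC r hrC a ha]
      rw [hU τ, hsplit]
      rw [Finset.sum_mul, Finset.mul_sum]
      refine Finset.sum_congr rfl fun C hC => ?_
      obtain ⟨μ, hμ⟩ := hCsum C hC
      rw [hμ, smul_mul_assoc, mul_smul_comm, hcommC Pmin hcomm C hC]
    -- now build such a τ
    by_cases hex : ∃ C ∈ Pmin.parts, ∃ u ∈ C, ∃ v ∈ C, θ u ≠ θ v
    · obtain ⟨C₀, hC₀, u₀, hu₀, v₀, hv₀, hδne⟩ := hex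
      set δ : ℝ := θ u₀ - θ v₀ with hδ
      have hδ0 : δ ≠ 0 := sub_ne_zero.2 hδne
      have hq : ∀ r s : Fin (d+1), ∃ q : ℚ,
          (∃ C ∈ Pmin.parts, r ∈ C ∧ s ∈ C) → θ r - θ s = (q : ℝ) * δ := by
        intro r s
        by_cases h : ∃ C ∈ Pmin.parts, r ∈ C ∧ s ∈ C
        · obtain ⟨C, hC, hr, hs⟩ := h
          obtain ⟨q, hq⟩ := hratio C hC C₀ hC₀ r hr s hs u₀ hu₀ v₀ hv₀ hδne
          exact ⟨q, fun _ => hq⟩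
        · exact ⟨0, fun h' => absurd h' h⟩
      choose q hq using hq
      set Nn : ℕ := ∏ r : Fin (d+1), ∏ s : Fin (d+1), (q r s).den with hNn
      have hNpos : 0 < Nn := by
        refine Finset.prod_pos fun r _ => Finset.prod_pos fun s _ => (q r s).den_pos
      have hπ : (0:ℝ) < Real.pi := Real.pi_pos
      refine ⟨2 * Real.pi * Nn / |δ|, ?_, ?_⟩
      · have : (0:ℝ) < |δ| := abs_pos.2 hδ0
        positivity
      · intro C hC r hr s hs
        have hsame : ∃ C' ∈ Pmin.parts, r ∈ C' ∧ s ∈ C' := ⟨C, hC, hr, hs⟩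
        have hqr := hq r s hsame
        have hden : ((q r s).den : ℤ) ∣ (Nn : ℤ) := by
          have h1 : (q r s).den ∣ Nn := by
            refine dvd_trans
              (Finset.dvd_prod_of_mem (fun s' => (q r s').den) (Finset.mem_univ s)) ?_
            exact Finset.dvd_prod_of_mem (fun r' => ∏ s', (q r' s').den) (Finset.mem_univ r)
          exact_mod_cast h1
        obtain ⟨t, ht⟩ := hden
        have hz : ((Nn : ℚ)) * (q r s) = ((t * (q r s).num : ℤ) : ℚ) := by
          have hd : ((Nn : ℤ) : ℚ) = ((q r s).den : ℚ) * (t : ℚ) := by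
            exact_mod_cast congrArg (fun z : ℤ => (z : ℚ)) ht
          rw [show ((Nn : ℚ)) = (((Nn : ℤ)) : ℚ) by push_cast; ring, hd]
          rw [mul_comm ((q r s).den : ℚ) (t : ℚ), mul_assoc]
          rw [Rat.den_mul_eq_num]
          push_cast
          ring
        set z : ℤ := t * (q r s).num with hzdef
        have hzR : ((Nn : ℝ)) * ((q r s : ℚ) : ℝ) = (z : ℝ) := by
          exact_mod_cast congrArg (fun x : ℚ => (x : ℝ)) hz
        set m : ℤ := if 0 ≤ δ then z else -z with hm
        have habs0 : |δ| ≠ 0 := abs_ne_zero.2 hδ0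
        have hmδ : (m : ℝ) * |δ| = (z : ℝ) * δ := by
          rcases abs_cases δ with ⟨h1, h2⟩ | ⟨h1, h2⟩
          · rw [hm, if_pos h2, h1]
          · rw [hm, if_neg (not_le.2 h2), h1]
            push_cast
            ring
        apply exp_eq_of_int m
        rw [hqr]
        rw [div_mul_eq_mul_div, div_eq_iff habs0]
        linear_combination (2 * Real.pi * δ) * hzR - (2 * Real.pi) * hmδ
    · push_neg at hex
      refine ⟨1, one_pos, ?_⟩
      intro C hC r hr s hs
      rw [hex C hC r hr s hs]
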